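/- Let Φ(λ,r) be defined by Φ(λ,0)=1, Φ(λ,1)=λ/(q+1), and Φ(λ,r+1) = (1/q)(λΦ(λ,r) − Φ(λ,r−1)) for r ≥ 1. Then for all r ≥ 0 and all λ, Φ(λ,r) = q^{−r/2} ( (2/(q+1)) P_r(λ/(2√q)) + ((q−1)/(q+1)) Q_r(λ/(2√q)) ), where P_r and Q_r are the Chebyshev polynomials of the first and second kind. -/

import Mathlib

/-- The spherical function recursion on the (q+1)-regular tree equals the explicit
Chebyshev-polynomial formula. -/
theorem spherical_function_chebyshev (q : ℕ) (hq : 2 ≤ q) (Φ : ℝ → ℕ → ℝ)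
    (h0 : ∀ x : ℝ, Φ x 0 = 1)
    (h1 : ∀ x : ℝ, Φ x 1 = x / ((q : ℝ) + 1))
    (hrec : ∀ (x : ℝ) (r : ℕ), 1 ≤ r →
      Φ x (r + 1) = (1 / (q : ℝ)) * (x * Φ x r - Φ x (r - 1))) :
    ∀ (x : ℝ) (r : ℕ),
      Φ x r = ((2 / ((q : ℝ) + 1)) * (Polynomial.Chebyshev.T ℝ r).eval (x / (2 * Real.sqrt q))
          + (((q : ℝ) - 1) / ((q : ℝ) + 1)) * (Polynomial.Chebyshev.U ℝ r).eval (x / (2 * Real.sqrt q)))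
        / (Real.sqrt q) ^ r := by
  intro x
  have hq0 : (0:ℝ) < q := by positivity
  have hs0 : Real.sqrt q ≠ 0 := by positivity
  have hs2 : Real.sqrt q ^ 2 = q := Real.sq_sqrt hq0.le
  have hq1 : (q:ℝ) + 1 ≠ 0 := by positivity
  have hqne : (q:ℝ) ≠ 0 := hq0.ne'
  intro r
  induction r using Nat.twoStepInduction with
  | zero =>
    simp [h0, Polynomial.Chebyshev.T_zero, Polynomial.Chebyshev.U_zero]
    field_simp
    ring
  | one =>
    rw [h1]
    have h : ((1:ℕ):ℤ) = 1 := by norm_num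
    rw [h, Polynomial.Chebyshev.T_one, Polynomial.Chebyshev.U_one]
    simp only [Polynomial.eval_mul, Polynomial.eval_ofNat, Polynomial.eval_X, pow_one]
    rw [← hs2]
    set s := Real.sqrt q
    have hsn : 0 ≤ s := Real.sqrt_nonneg _
    simp only [Real.sqrt_sq hsn]
    have hs1 : s ^ 2 + 1 ≠ 0 := by positivity
    field_simp
    ring
  | more r ih ih1 =>
    have hrw : Φ x (r + 2) = (1 / (q : ℝ)) * (x * Φ x (r+1) - Φ x r) := by
      have := hrec x (r+1) (by omega)
      simpa using this
    rw [hrw, ih, ih1]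
    have hcast : (((r+2:ℕ)):ℤ) = (r:ℤ) + 2 := by push_cast; ring
    have hcast1 : (((r+1:ℕ)):ℤ) = (r:ℤ) + 1 := by push_cast; ring
    rw [hcast, hcast1, Polynomial.Chebyshev.T_add_two, Polynomial.Chebyshev.U_add_two]
    simp only [Polynomial.eval_sub, Polynomial.eval_mul, Polynomial.eval_ofNat,
      Polynomial.eval_X]
    set y := x / (2 * Real.sqrt q) with hy
    set s := Real.sqrt q
    have hx : x = 2 * s * y := by rw [hy]; field_simp
    set A := (Polynomial.Chebyshev.T ℝ (r:ℤ)).eval y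
    set B := (Polynomial.Chebyshev.U ℝ (r:ℤ)).eval y
    set C := (Polynomial.Chebyshev.T ℝ ((r:ℤ)+1)).eval y
    set D := (Polynomial.Chebyshev.U ℝ ((r:ℤ)+1)).eval y
    rw [hx, ← hs2]
    have hs1 : s ^ 2 + 1 ≠ 0 := by positivity
    field_simp
    ring
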